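/- Let ℓ : ℝ → ℝ be convex and differentiable, and let σ : ℝ → ℝ satisfy σ(z) = z for all z ≥ 0. Let (x_i, y_i)_{i=1}^n be a dataset with ‖x_i‖ ≤ K₁ for all i, and let w* minimize the convex function w ↦ ∑_i ℓ(-y_i ⟨w, x_i⟩) over ℝ^d. Suppose all x_i have last coordinate 1 and define w_j* = w* + (K+1)·e_d where K = max_i |⟨w*, x_i⟩| and e_d is the last standard basis vector, so that ⟨w_j*, x_i⟩ ≥ 1 for all i, j. Set a_j* = 1/M for j = 1,...,M and a₀* = 0. Then there exists ε > 0 such that for all perturbations Δa₀, Δa_j, Δw_j with |Δa_j| bounded and ‖Δw_j‖ ≤ ε, the perturbed network f(x_i; θ̃) = Δa₀ + ∑_j (1/M + Δa_j)·⟨w_j* + Δw_j, x_i⟩ is an affine function of x_i evaluated at each data point, and hence the empirical loss at θ̃ is at least ∑_i ℓ(-y_i ⟨w*, x_i⟩) = the loss at θ*. In particular θ* is a local minimum whose training error equals the best linear classifier's error for the surrogate-optimal linear predictor. -/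
import Mathlib


/-- Leaky-ReLU-class counterexample (locally linear regime): near the constructed point
all pre-activations stay positive, so the network is affine in `x` at the data points,
and the empirical loss of any nearby parameter is at least the loss of the optimal
linear predictor `w*`. -/
theorem leaky_relu_local_min
    (d n M : ℕ) (hM : 0 < M) (K K₁ : ℝ)
    (x : Fin n → Fin (d + 1) → ℝ) (y : Fin n → ℝ)
    (hy : ∀ i, y i = 1 ∨ y i = -1)
    (hlast : ∀ i, x i (Fin.last d) = 1)
    (hK₁ : ∀ i, Real.sqrt (∑ k, (x i k) ^ 2) ≤ K₁)
    (ℓ : ℝ → ℝ) (hconv : ConvexOn ℝ Set.univ ℓ) (hdiff : Differentiable ℝ ℓ)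
    (σ : ℝ → ℝ) (hσ : ∀ z : ℝ, 0 ≤ z → σ z = z)
    (ws : Fin (d + 1) → ℝ)
    (hopt : ∀ v : Fin (d + 1) → ℝ,
      ∑ i, ℓ (-(y i) * ∑ k, ws k * x i k) ≤ ∑ i, ℓ (-(y i) * ∑ k, v k * x i k))
    (hK : ∀ i, |∑ k, ws k * x i k| ≤ K)
    (w : Fin M → Fin (d + 1) → ℝ)
    (hw : ∀ j, w j = ws + (K + 1) • (fun k => if k = Fin.last d then (1 : ℝ) else 0)) :
    ∃ ε > (0 : ℝ), ∀ (Δa0 : ℝ) (Δa : Fin M → ℝ) (Δw : Fin M → Fin (d + 1) → ℝ),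
      (∀ j, |Δa j| ≤ 1 / 2) → (∀ j, Real.sqrt (∑ k, (Δw j k) ^ 2) ≤ ε) →
      (∃ wt : Fin (d + 1) → ℝ, ∀ i,
        Δa0 + ∑ j, ((1 / (M : ℝ)) + Δa j) * σ (∑ k, (w j k + Δw j k) * x i k)
          = ∑ k, wt k * x i k) ∧
      ∑ i, ℓ (-(y i) * ∑ k, ws k * x i k) ≤
        ∑ i, ℓ (-(y i) * (Δa0 +
          ∑ j, ((1 / (M : ℝ)) + Δa j) * σ (∑ k, (w j k + Δw j k) * x i k))) := by
  have hεpos : (0 : ℝ) < 1 / (|K₁| + 1) := by positivity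
  refine ⟨1 / (|K₁| + 1), hεpos, ?_⟩
  intro Δa0 Δa Δw hΔa hΔw
  -- all pre-activations stay nonneg
  have hpos : ∀ j i, 0 ≤ ∑ k, (w j k + Δw j k) * x i k := by
    intro j i
    have h1 : ∑ k, w j k * x i k = (∑ k, ws k * x i k) + (K + 1) := by
      rw [hw]
      simp only [Pi.add_apply, Pi.smul_apply, smul_eq_mul, add_mul,
        Finset.sum_add_distrib]
      congr 1
      simp [mul_ite, ite_mul, Finset.sum_ite_eq', hlast i]
    have hCS : |∑ k, Δw j k * x i k| ≤
        Real.sqrt (∑ k, (Δw j k) ^ 2) * Real.sqrt (∑ k, (x i k) ^ 2) := by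
      have := Finset.sum_mul_sq_le_sq_mul_sq Finset.univ (fun k => Δw j k) (fun k => x i k)
      have h2 : |∑ k, Δw j k * x i k| =
          Real.sqrt ((∑ k, Δw j k * x i k) ^ 2) := by
        rw [Real.sqrt_sq_eq_abs]
      rw [h2, ← Real.sqrt_mul (by positivity)]
      exact Real.sqrt_le_sqrt this
    have hx0 : (0:ℝ) ≤ Real.sqrt (∑ k, (x i k) ^ 2) := Real.sqrt_nonneg _
    have hxK : Real.sqrt (∑ k, (x i k) ^ 2) ≤ |K₁| := le_trans (hK₁ i) (le_abs_self K₁)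
    have hΔ0 : (0:ℝ) ≤ Real.sqrt (∑ k, (Δw j k) ^ 2) := Real.sqrt_nonneg _
    have hmul : Real.sqrt (∑ k, (Δw j k) ^ 2) * Real.sqrt (∑ k, (x i k) ^ 2) ≤
        (1 / (|K₁| + 1)) * |K₁| :=
      mul_le_mul (hΔw j) hxK hx0 (le_of_lt hεpos)
    have hlt : (1 / (|K₁| + 1)) * |K₁| ≤ 1 := by
      rw [div_mul_eq_mul_div, one_mul, div_le_one (by positivity)]
      linarith [abs_nonneg K₁]
    have hK' : |∑ k, ws k * x i k| ≤ K := hK i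
    have habs : -1 ≤ ∑ k, Δw j k * x i k := by
      have := neg_abs_le (∑ k, Δw j k * x i k)
      nlinarith
    have hsplit : ∑ k, (w j k + Δw j k) * x i k
        = (∑ k, w j k * x i k) + ∑ k, Δw j k * x i k := by
      rw [← Finset.sum_add_distrib]
      exact Finset.sum_congr rfl fun k _ => (add_mul _ _ _)
    rw [hsplit, h1]
    have := neg_abs_le (∑ k, ws k * x i k)
    linarith
  have hσ' : ∀ j i, σ (∑ k, (w j k + Δw j k) * x i k) = ∑ k, (w j k + Δw j k) * x i k :=
    fun j i => hσ _ (hpos j i)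
  set wt : Fin (d + 1) → ℝ := fun k =>
    (if k = Fin.last d then Δa0 else 0) + ∑ j, ((1 / (M : ℝ)) + Δa j) * (w j k + Δw j k)
    with hwt
  have hrep : ∀ i,
      Δa0 + ∑ j, ((1 / (M : ℝ)) + Δa j) * σ (∑ k, (w j k + Δw j k) * x i k)
        = ∑ k, wt k * x i k := by
    intro i
    simp only [hσ', hwt]
    rw [Finset.sum_congr rfl (fun k _ => add_mul
      (if k = Fin.last d then Δa0 else 0) (∑ j, ((1 / (M : ℝ)) + Δa j) * (w j k + Δw j k))
      (x i k)), Finset.sum_add_distrib]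
    congr 1
    · simp [ite_mul, Finset.sum_ite_eq', hlast i]
    · simp_rw [Finset.mul_sum, Finset.sum_mul]
      rw [Finset.sum_comm]
      exact Finset.sum_congr rfl fun j _ => Finset.sum_congr rfl fun k _ => by ring
  refine ⟨⟨wt, hrep⟩, ?_⟩
  calc ∑ i, ℓ (-(y i) * ∑ k, ws k * x i k) ≤ ∑ i, ℓ (-(y i) * ∑ k, wt k * x i k) := hopt wt
    _ = _ := by
        refine Finset.sum_congr rfl fun i _ => ?_
        rw [hrep i]
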